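/- Let G be a group, let a_1, ..., a_{m+1} be pairwise commuting elements of G, and let f ∈ G satisfy f a_i f^{-1} = a_{i+1} for i = 1, ..., m. Then for any integers k_1, ..., k_{m+1}, with K_i = k_1 + ... + k_i, one has a_1^{k_1} a_2^{k_2} ··· a_{m+1}^{k_{m+1}} = a_{m+1}^{K_{m+1}} · [f, a_1^{-K_1} a_2^{-K_2} ··· a_m^{-K_m}]. -/

import Mathlib

open scoped commutatorElement

private lemma aux_commute_prod {G : Type*} [Group G] (x : G) (n : ℕ) (b : ℕ → G) (e : ℕ → ℤ)
    (h : ∀ i, i < n → Commute x (b i)) :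
    Commute x (((List.range n).map fun i => b i ^ e i).prod) := by
  apply Commute.list_prod_right
  intro y hy
  simp only [List.mem_map, List.mem_range] at hy
  obtain ⟨i, hi, rfl⟩ := hy
  exact (h i hi).zpow_right _

private lemma aux_alg {G : Type*} [Group G] (A B P Q : G) (Km k' : ℤ)
    (cBA : Commute B A) (cBP : Commute B P) (cBQ : Commute B Q) (cAQ : Commute A Q) :
    A ^ Km * (Q * P⁻¹) * B ^ k' = B ^ (Km + k') * (Q * B ^ (-Km) * A ^ Km * P⁻¹) := by
  have hBig : Commute (B ^ k') (A ^ Km * (Q * P⁻¹)) :=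
    ((cBA.zpow_left k').zpow_right Km).mul_right
      ((cBQ.zpow_left k').mul_right ((cBP.zpow_left k').inv_right))
  symm
  calc B ^ (Km + k') * (Q * B ^ (-Km) * A ^ Km * P⁻¹)
      = B ^ (Km + k') * (B ^ (-Km) * Q * A ^ Km * P⁻¹) := by
        rw [← (cBQ.zpow_left (-Km)).eq]
    _ = B ^ k' * (Q * A ^ Km * P⁻¹) := by group
    _ = B ^ k' * (A ^ Km * Q * P⁻¹) := by rw [(cAQ.zpow_left Km).eq]
    _ = A ^ Km * (Q * P⁻¹) * B ^ k' := by rw [← mul_assoc, ← hBig.eq]; group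

theorem prod_powers_eq_mul_commutator {G : Type*} [Group G] (m : ℕ) (a : ℕ → G) (f : G)
    (hcomm : ∀ i j, i ≤ m → j ≤ m → a i * a j = a j * a i)
    (hconj : ∀ i, i < m → f * a i * f⁻¹ = a (i + 1))
    (k : ℕ → ℤ) :
    ((List.range (m + 1)).map (fun i => a i ^ k i)).prod =
      a m ^ (∑ j ∈ Finset.range (m + 1), k j) *
        ⁅f, ((List.range m).map (fun i => a i ^ (-(∑ j ∈ Finset.range (i + 1), k j)))).prod⁆ := by
  induction m with
  | zero => simp [List.range_succ]
  | succ m ih =>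
      have hcomm' : ∀ i j, i ≤ m → j ≤ m → a i * a j = a j * a i :=
        fun i j hi hj => hcomm i j (hi.trans (Nat.le_succ m)) (hj.trans (Nat.le_succ m))
      have hconj' : ∀ i, i < m → f * a i * f⁻¹ = a (i + 1) :=
        fun i hi => hconj i (hi.trans (Nat.lt_succ_self m))
      have IH := ih hcomm' hconj'
      rw [List.range_succ, List.map_append, List.prod_append, List.map_singleton,
        List.prod_singleton, IH, List.range_succ, List.map_append, List.prod_append,
        List.map_singleton, List.prod_singleton, Finset.sum_range_succ k (m + 1)]
      set Km : ℤ := ∑ j ∈ Finset.range (m + 1), k j with hKm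
      set P : G := (List.map (fun i => a i ^ (-∑ j ∈ Finset.range (i + 1), k j))
        (List.range m)).prod with hP
      set Q : G := (List.map (fun i => a (i + 1) ^ (-∑ j ∈ Finset.range (i + 1), k j))
        (List.range m)).prod with hQ
      have hconjP : f * P * f⁻¹ = Q := by
        rw [hP, hQ, ← MulAut.conj_apply, map_list_prod, List.map_map]
        congr 1
        refine List.map_congr_left fun i hi => ?_
        rw [List.mem_range] at hi
        simp only [Function.comp_apply, map_zpow, MulAut.conj_apply]
        rw [hconj i (Nat.lt_succ_of_lt hi)]
      have cBA : Commute (a (m + 1)) (a m) := hcomm (m + 1) m le_rfl (Nat.le_succ m)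
      have cBP : Commute (a (m + 1)) P := by
        rw [hP]
        exact aux_commute_prod _ _ _ _ fun i hi => hcomm (m + 1) i le_rfl (by omega)
      have cBQ : Commute (a (m + 1)) Q := by
        rw [hQ]
        exact aux_commute_prod _ _ _ _ fun i hi => hcomm (m + 1) (i + 1) le_rfl (by omega)
      have cAQ : Commute (a m) Q := by
        rw [hQ]
        exact aux_commute_prod _ _ _ _ fun i hi => hcomm m (i + 1) (by omega) (by omega)
      have hfP : ⁅f, P⁆ = Q * P⁻¹ := by rw [commutatorElement_def, hconjP]
      have h1 : f * a m ^ (-Km) * f⁻¹ = a (m + 1) ^ (-Km) := by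
        rw [← MulAut.conj_apply, map_zpow, MulAut.conj_apply, hconj m (Nat.lt_succ_self m)]
      have hfPA : ⁅f, P * a m ^ (-Km)⁆ = Q * a (m + 1) ^ (-Km) * a m ^ Km * P⁻¹ := by
        rw [commutatorElement_def]
        calc f * (P * a m ^ (-Km)) * f⁻¹ * (P * a m ^ (-Km))⁻¹
            = f * P * f⁻¹ * (f * a m ^ (-Km) * f⁻¹) * (a m ^ Km * P⁻¹) := by group
          _ = Q * a (m + 1) ^ (-Km) * a m ^ Km * P⁻¹ := by rw [hconjP, h1]; group
      rw [hfP, hfPA]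
      exact aux_alg (a m) (a (m + 1)) P Q Km (k (m + 1)) cBA cBP cBQ cAQ
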